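/- In Example 2.2 (linear SCM with covariates X¹, X², X³ and intercept X⁴), the population OLS coefficient of Y given all covariates equals (0.5, 0.5, 0.5, 0)^⊤ on I₁, (0.8, 0.8, 0.2, 0)^⊤ on I₂, and (−0.2, 0.8, 0.2, 0)^⊤ on I₃, so the time points k₁ and k₂ are both regression change points even though the causal mechanism of Y only changes at k₂. -/

import Mathlib

open MeasureTheory BigOperators Real ProbabilityTheory
open scoped NNReal ENNReal
open MeasureTheory Real ProbabilityTheory
open scoped NNReal ENNReal

lemma int_sq_exp {b : ℝ} (hb : 0 < b) :
    Integrable (fun x : ℝ => x ^ 2 * Real.exp (-b * x ^ 2)) := by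
  have := integrable_rpow_mul_exp_neg_mul_sq hb (s := 2) (by norm_num)
  convert this using 2 with x
  rw [← Real.rpow_natCast x 2]; norm_num

lemma integral_sq_exp {b : ℝ} (hb : 0 < b) :
    ∫ x : ℝ, x ^ 2 * Real.exp (-b * x ^ 2) = b ^ (-(3:ℝ)/2) * (Real.sqrt π / 2) := by
  have h1 : ∫ x : ℝ, x ^ 2 * Real.exp (-b * x ^ 2)
      = 2 * ∫ x in Set.Ioi (0:ℝ), x ^ 2 * Real.exp (-b * x ^ 2) := by
    rw [← integral_comp_abs (f := fun x => x ^ 2 * Real.exp (-b * x ^ 2))]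
    congr 1 with x
    rw [sq_abs]
  have h2 := integral_rpow_mul_exp_neg_mul_rpow (p := 2) (q := 2) (b := b)
      (by norm_num) (by norm_num) hb
  norm_num at h2
  simp_rw [neg_mul] at h1 ⊢
  have h3 : Real.Gamma (3/2) = Real.sqrt π / 2 := by
    have : (3:ℝ)/2 = 1/2 + 1 := by norm_num
    rw [this, Real.Gamma_add_one (by norm_num), Real.Gamma_one_half_eq]
    ring
  rw [h1, h2, h3]
  rw [show (-3/2:ℝ) = -(3/2) by norm_num]
  ring

lemma pdf_mul_eq (v : ℝ≥0) (g : ℝ → ℝ) (x : ℝ) :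
    gaussianPDFReal 0 v x * g x
      = (Real.sqrt (2 * π * v))⁻¹ * (g x * Real.exp (-(2*(v:ℝ))⁻¹ * x ^ 2)) := by
  rw [gaussianPDFReal]
  have : -(x - 0) ^ 2 / (2 * (v:ℝ)) = -(2*(v:ℝ))⁻¹ * x ^ 2 := by
    rw [sub_zero]; ring
  rw [this]; ring

lemma integral_gaussianReal_eq (v : ℝ≥0) (hv : v ≠ 0) (g : ℝ → ℝ) :
    ∫ x, g x ∂(gaussianReal 0 v) = ∫ x, gaussianPDFReal 0 v x * g x := by
  rw [gaussianReal_of_var_ne_zero 0 hv]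
  have h : (gaussianPDF 0 v) = fun x => ((Real.toNNReal (gaussianPDFReal 0 v x) : ℝ≥0) : ℝ≥0∞) :=
    rfl
  rw [h, integral_withDensity_eq_integral_smul (measurable_gaussianPDFReal 0 v).real_toNNReal g]
  congr 1 with x
  simp [NNReal.smul_def, Real.coe_toNNReal _ (gaussianPDFReal_nonneg 0 v x)]

lemma integrable_gaussianReal_iff (v : ℝ≥0) (hv : v ≠ 0) (g : ℝ → ℝ) :
    Integrable g (gaussianReal 0 v) ↔ Integrable (fun x => gaussianPDFReal 0 v x * g x) := by
  rw [gaussianReal_of_var_ne_zero 0 hv]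
  have h : (gaussianPDF 0 v) = fun x => ((Real.toNNReal (gaussianPDFReal 0 v x) : ℝ≥0) : ℝ≥0∞) :=
    rfl
  rw [h, integrable_withDensity_iff_integrable_smul (measurable_gaussianPDFReal 0 v).real_toNNReal]
  have heq : ∀ x : ℝ, (Real.toNNReal (gaussianPDFReal 0 v x) : ℝ≥0) • g x
      = gaussianPDFReal 0 v x * g x := fun x => by
    simp [NNReal.smul_def, Real.coe_toNNReal _ (gaussianPDFReal_nonneg 0 v x)]
  constructor <;> intro hh
  · exact hh.congr (Filter.Eventually.of_forall fun x => heq x)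
  · exact hh.congr (Filter.Eventually.of_forall fun x => (heq x).symm)

lemma gauss_sq_integrable (v : ℝ≥0) (hv : v ≠ 0) :
    Integrable (fun x : ℝ => x * x) (gaussianReal 0 v) := by
  rw [integrable_gaussianReal_iff v hv]
  have hv' : (0:ℝ) < v := by positivity
  have hb : (0:ℝ) < (2*(v:ℝ))⁻¹ := by positivity
  have := (int_sq_exp hb).const_mul (Real.sqrt (2 * π * v))⁻¹
  refine this.congr (Filter.Eventually.of_forall fun x => ?_)
  dsimp only
  rw [pdf_mul_eq v (fun y => y * y) x]
  ring


lemma gauss_integral_sq (v : ℝ≥0) (hv : v ≠ 0) :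
    ∫ x, x * x ∂(gaussianReal 0 v) = v := by
  rw [integral_gaussianReal_eq v hv]
  have hv' : (0:ℝ) < v := by positivity
  have hb : (0:ℝ) < (2*(v:ℝ))⁻¹ := by positivity
  have h1 : ∀ x : ℝ, gaussianPDFReal 0 v x * (x * x)
      = (Real.sqrt (2 * π * v))⁻¹ * (x ^ 2 * Real.exp (-(2*(v:ℝ))⁻¹ * x ^ 2)) := by
    intro x; rw [pdf_mul_eq v (fun y => y * y) x]; ring
  simp_rw [h1]
  rw [integral_const_mul, integral_sq_exp hb]
  have h2v : (0:ℝ) < 2 * v := by positivity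
  have h2 : ((2*(v:ℝ))⁻¹) ^ (-(3:ℝ)/2) = (2*(v:ℝ)) * Real.sqrt (2*(v:ℝ)) := by
    rw [show (-(3:ℝ)/2) = -(3/2) by norm_num, Real.inv_rpow h2v.le, Real.rpow_neg h2v.le,
      inv_inv, show ((3:ℝ)/2) = 1 + 1/2 by norm_num, Real.rpow_add h2v, Real.rpow_one,
      ← Real.sqrt_eq_rpow]
  rw [h2]
  have h3 : Real.sqrt (2 * π * v) = Real.sqrt (2*(v:ℝ)) * Real.sqrt π := by
    rw [← Real.sqrt_mul h2v.le]; ring_nf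
  rw [h3]
  have hs : Real.sqrt (2*(v:ℝ)) > 0 := Real.sqrt_pos.mpr h2v
  have hp : Real.sqrt π > 0 := Real.sqrt_pos.mpr pi_pos
  have hss : Real.sqrt (2*(v:ℝ)) * Real.sqrt (2*(v:ℝ)) = 2*(v:ℝ) := Real.mul_self_sqrt h2v.le
  have hpp : Real.sqrt π * Real.sqrt π = π := Real.mul_self_sqrt pi_pos.le
  field_simp

lemma gauss_integrable_id (v : ℝ≥0) (hv : v ≠ 0) :
    Integrable (fun x : ℝ => x) (gaussianReal 0 v) := by
  have hm : MeasureTheory.MemLp (fun x : ℝ => x) 2 (gaussianReal 0 v) := by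
    refine (memLp_two_iff_integrable_sq aestronglyMeasurable_id).mpr ?_
    have := gauss_sq_integrable v hv
    refine this.congr (Filter.Eventually.of_forall fun x => ?_)
    simp only [id_eq]; ring
  exact hm.integrable one_le_two

lemma gauss_integral_id (v : ℝ≥0) (hv : v ≠ 0) :
    ∫ x, x ∂(gaussianReal 0 v) = 0 := by
  have hmap : (gaussianReal 0 v).map ((-1 : ℝ) * ·) = gaussianReal 0 v := by
    rw [gaussianReal_map_const_mul (μ := 0) (v := v) (-1), mul_zero]
    congr 1
    apply NNReal.coe_injective
    push_cast
    norm_num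
  have h2 : ∫ x, x ∂((gaussianReal 0 v).map (fun x : ℝ => (-1 : ℝ) * x))
      = ∫ x, -1 * x ∂(gaussianReal 0 v) :=
    integral_map (f := fun x : ℝ => x)
      (Measurable.aemeasurable (by fun_prop)) aestronglyMeasurable_id
  rw [show ((gaussianReal 0 v).map (fun x : ℝ => (-1 : ℝ) * x)) = gaussianReal 0 v from hmap] at h2
  rw [integral_const_mul] at h2
  linarith

section Noise
variable {Ω : Type*} [MeasurableSpace Ω] (P : Measure Ω) [IsProbabilityMeasure P]

lemma noise_facts (e : Ω → ℝ) (v : ℝ≥0) (hv : v ≠ 0)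
    (he : Measure.map e P = gaussianReal 0 v) :
    AEMeasurable e P ∧ Integrable e P ∧ Integrable (fun ω => e ω * e ω) P ∧
    (∫ ω, e ω ∂P = 0) ∧ (∫ ω, e ω * e ω ∂P = (v : ℝ)) := by
  have haem : AEMeasurable e P := by
    by_contra h
    rw [Measure.map_of_not_aemeasurable h] at he
    have h1 := congrArg (fun μ : Measure ℝ => μ Set.univ) he
    simp only [Measure.coe_zero, Pi.zero_apply] at h1
    rw [measure_univ] at h1
    exact one_ne_zero h1.symm
  have hint : Integrable e P := by
    have h1 : Integrable (fun x : ℝ => x) (P.map e) := by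
      rw [he]; exact gauss_integrable_id v hv
    exact (integrable_map_measure aestronglyMeasurable_id haem).mp h1
  have hintsq : Integrable (fun ω => e ω * e ω) P := by
    have h1 : Integrable (fun x : ℝ => x * x) (P.map e) := by
      rw [he]; exact gauss_sq_integrable v hv
    exact (integrable_map_measure (measurable_id.mul measurable_id).aestronglyMeasurable haem).mp h1
  have hmean : ∫ ω, e ω ∂P = 0 := by
    have h1 : ∫ x, x ∂(P.map e) = ∫ ω, e ω ∂P :=
      integral_map (f := fun x : ℝ => x) haem aestronglyMeasurable_id
    rw [he, gauss_integral_id v hv] at h1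
    exact h1.symm
  have hsq : ∫ ω, e ω * e ω ∂P = (v : ℝ) := by
    have h1 : ∫ x, x * x ∂(P.map e) = ∫ ω, e ω * e ω ∂P :=
      integral_map (f := fun x : ℝ => x * x) haem (measurable_id.mul measurable_id).aestronglyMeasurable
    rw [he, gauss_integral_sq v hv] at h1
    exact h1.symm
  exact ⟨haem, hint, hintsq, hmean, hsq⟩

lemma noise_system (f : Fin 4 → Ω → ℝ) (v : Fin 4 → ℝ≥0) (hv : ∀ i, v i ≠ 0)
    (hind : ProbabilityTheory.iIndepFun f P)
    (hmap : ∀ i, Measure.map (f i) P = gaussianReal 0 (v i)) :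
    ∀ k l : Fin 5,
      Integrable (fun ω => (Fin.snoc f (fun _ => (1:ℝ)) : Fin 5 → Ω → ℝ) k ω *
        (Fin.snoc f (fun _ => (1:ℝ)) : Fin 5 → Ω → ℝ) l ω) P ∧
      ∫ ω, (Fin.snoc f (fun _ => (1:ℝ)) : Fin 5 → Ω → ℝ) k ω *
        (Fin.snoc f (fun _ => (1:ℝ)) : Fin 5 → Ω → ℝ) l ω ∂P
        = if k = l then (Fin.snoc (fun i => ((v i : ℝ))) 1 : Fin 5 → ℝ) k else 0 := by
  have hf := fun i => noise_facts P (f i) (v i) (hv i) (hmap i)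
  intro k l
  refine Fin.lastCases ?_ ?_ k
  · refine Fin.lastCases ?_ ?_ l
    · simp only [Fin.snoc_last, if_pos rfl, mul_one]
      exact ⟨integrable_const 1, by simp⟩
    · intro j
      simp only [Fin.snoc_last, Fin.snoc_castSucc, one_mul]
      refine ⟨(hf j).2.1, ?_⟩
      rw [if_neg (Fin.castSucc_lt_last j).ne']
      exact (hf j).2.2.2.1
  · intro i
    refine Fin.lastCases ?_ ?_ l
    · simp only [Fin.snoc_last, Fin.snoc_castSucc, mul_one]
      refine ⟨(hf i).2.1, ?_⟩
      rw [if_neg (by exact fun h => absurd h (Fin.castSucc_lt_last i).ne)]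
      exact (hf i).2.2.2.1
    · intro j
      simp only [Fin.snoc_castSucc]
      by_cases hij : i = j
      · subst hij
        refine ⟨(hf i).2.2.1, ?_⟩
        rw [if_pos rfl]
        exact (hf i).2.2.2.2
      · have hIndep : ProbabilityTheory.IndepFun (f i) (f j) P := hind.indepFun hij
        refine ⟨hIndep.integrable_mul (hf i).2.1 (hf j).2.1, ?_⟩
        rw [if_neg (by simp [Fin.castSucc_inj, hij])]
        have h2 := hIndep.integral_mul_eq_mul_integral (hf i).2.1.aestronglyMeasurable (hf j).2.1.aestronglyMeasurable
        rw [show (∫ ω, f i ω * f j ω ∂P) = integral P (f i * f j) from rfl, h2,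
          (hf i).2.2.2.1, (hf j).2.2.2.1, mul_zero]

end Noise

open BigOperators

lemma integral_sum_mul {Ω : Type*} [MeasurableSpace Ω] {P : Measure Ω}
    (ε : Fin 5 → Ω → ℝ) (w : Fin 5 → ℝ)
    (hfact : ∀ k l : Fin 5, Integrable (fun ω => ε k ω * ε l ω) P ∧
      ∫ ω, ε k ω * ε l ω ∂P = if k = l then w k else 0)
    (a b : Fin 5 → ℝ) :
    ∫ ω, (∑ k, a k * ε k ω) * (∑ l, b l * ε l ω) ∂P = ∑ k, a k * b k * w k := by
  have h1 : ∀ ω, (∑ k, a k * ε k ω) * (∑ l, b l * ε l ω)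
      = ∑ k, ∑ l, a k * b l * (ε k ω * ε l ω) := by
    intro ω
    rw [Finset.sum_mul_sum]
    refine Finset.sum_congr rfl fun k _ => Finset.sum_congr rfl fun l _ => by ring
  simp_rw [h1]
  rw [integral_finset_sum _ (fun k _ => integrable_finset_sum _
    (fun l _ => ((hfact k l).1.const_mul _)))]
  have h2 : ∀ k, ∫ ω, ∑ l, a k * b l * (ε k ω * ε l ω) ∂P = a k * b k * w k := by
    intro k
    rw [integral_finset_sum _ (fun l _ => ((hfact k l).1.const_mul _))]
    have h3 : ∀ l, ∫ ω, a k * b l * (ε k ω * ε l ω) ∂P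
        = a k * b l * (if k = l then w k else 0) := by
      intro l
      rw [integral_const_mul, (hfact k l).2]
    simp_rw [h3]
    simp [mul_ite, mul_zero]
  exact Finset.sum_congr rfl fun k _ => h2 k



/-- Population Gram matrix `E[X^S (X^S)ᵀ]` restricted to indices in `S`. -/
noncomputable def Gram {Ω : Type*} [MeasurableSpace Ω] (P : Measure Ω) {d : ℕ}
    (X : Ω → Fin (d + 1) → ℝ) (S : Finset (Fin (d + 1))) : Matrix S S ℝ :=
  Matrix.of fun i j => ∫ ω, X ω i.1 * X ω j.1 ∂P

/-- Population OLS coefficient given the covariate subset `S`: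
`β^S = E[X^S (X^S)ᵀ]⁻¹ E[X^S Y]`, with zero entries outside `S`. -/
noncomputable def betaOLS {Ω : Type*} [MeasurableSpace Ω] (P : Measure Ω) {d : ℕ}
    (X : Ω → Fin (d + 1) → ℝ) (Y : Ω → ℝ) (S : Finset (Fin (d + 1))) : Fin (d + 1) → ℝ :=
  fun j =>
    if h : j ∈ S then
      ((Gram P X S)⁻¹.mulVec fun i => ∫ ω, X ω i.1 * Y ω ∂P) ⟨j, h⟩
    else 0

/-- Population OLS residual given `S`: `ε(S) = Y − Xᵀ β^{OLS}(S)`. -/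
noncomputable def resid {Ω : Type*} [MeasurableSpace Ω] (P : Measure Ω) {d : ℕ}
    (X : Ω → Fin (d + 1) → ℝ) (Y : Ω → ℝ) (S : Finset (Fin (d + 1))) : Ω → ℝ :=
  fun ω => Y ω - ∑ j, betaOLS P X Y S j * X ω j

lemma betaOLS_eq {Ω : Type*} [MeasurableSpace Ω] (P : Measure Ω)
    (X : Ω → Fin 4 → ℝ) (Y : Ω → ℝ) (M : Matrix (Fin 4) (Fin 4) ℝ) (bv β : Fin 4 → ℝ)
    (hG : ∀ i j : Fin 4, ∫ ω, X ω i * X ω j ∂P = M i j)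
    (hb : ∀ i : Fin 4, ∫ ω, X ω i * Y ω ∂P = bv i)
    (hdet : IsUnit M.det)
    (hβ : M.mulVec β = bv) :
    betaOLS P (d := 3) X Y Finset.univ = β := by
  let e : {x // x ∈ (Finset.univ : Finset (Fin 4))} ≃ Fin 4 :=
    Equiv.subtypeUnivEquiv (fun x => Finset.mem_univ x)
  have hGram : Gram P (d := 3) X Finset.univ = M.submatrix e e := by
    ext i j
    simp only [Gram, Matrix.of_apply, Matrix.submatrix_apply]
    exact hG i.1 j.1
  have hsolve : M⁻¹.mulVec bv = β := by
    rw [← hβ, Matrix.mulVec_mulVec, Matrix.nonsing_inv_mul M hdet, Matrix.one_mulVec]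
  funext j
  show (if h : j ∈ Finset.univ then
      ((Gram P (d := 3) X Finset.univ)⁻¹.mulVec fun i => ∫ ω, X ω i.1 * Y ω ∂P) ⟨j, h⟩
    else 0) = β j
  rw [dif_pos (Finset.mem_univ j), hGram, Matrix.inv_submatrix_equiv,
    Matrix.submatrix_mulVec_equiv]
  have hbv : ((fun i : {x // x ∈ (Finset.univ : Finset (Fin 4))} => ∫ ω, X ω i.1 * Y ω ∂P) ∘ e.symm)
      = bv := by
    funext i
    exact hb i
  rw [Function.comp_apply, hbv, hsolve]
  rfl


lemma regime_beta {Ω : Type*} [MeasurableSpace Ω] (P : Measure Ω) [IsProbabilityMeasure P]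
    (f : Fin 4 → Ω → ℝ) (vv : Fin 4 → ℝ≥0) (hv : ∀ i, vv i ≠ 0)
    (hind : ProbabilityTheory.iIndepFun f P)
    (hmap : ∀ i, Measure.map (f i) P = ProbabilityTheory.gaussianReal 0 (vv i))
    (w : Fin 5 → ℝ) (hw : (Fin.snoc (fun i => ((vv i : ℝ))) 1 : Fin 5 → ℝ) = w)
    (X : Ω → Fin 4 → ℝ) (Y : Ω → ℝ) (A : Fin 4 → Fin 5 → ℝ) (cY : Fin 5 → ℝ)
    (hXrep : ∀ i ω, X ω i = ∑ k, A i k * (Fin.snoc f (fun _ => (1:ℝ)) : Fin 5 → Ω → ℝ) k ω)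
    (hYrep : ∀ ω, Y ω = ∑ k, cY k * (Fin.snoc f (fun _ => (1:ℝ)) : Fin 5 → Ω → ℝ) k ω)
    (M : Matrix (Fin 4) (Fin 4) ℝ) (bv β : Fin 4 → ℝ)
    (hM : ∀ i j, ∑ k, A i k * A j k * w k = M i j)
    (hbv : ∀ i, ∑ k, A i k * cY k * w k = bv i)
    (hdet : IsUnit M.det) (hβ : M.mulVec β = bv) :
    betaOLS P (d := 3) X Y Finset.univ = β := by
  have hfact := noise_system P f vv hv hind hmap
  simp only [hw] at hfact
  have key := integral_sum_mul _ w hfact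
  refine betaOLS_eq P X Y M bv β ?_ ?_ hdet hβ
  · intro i j
    simp only [hXrep]
    rw [key]
    exact hM i j
  · intro i
    simp only [hXrep, hYrep]
    rw [key]
    exact hbv i

set_option maxHeartbeats 1000000 in
/-- **Example 2.2: population OLS coefficients and regression change points.**
Three regimes `r = 0, 1, 2` (intervals `I₁, I₂, I₃`) of a linear SCM with intercept `X⁴ = 1`:
`X¹ = ε¹`, `X² = ε²`; in regimes 0 and 1, `Y = X¹ + X² + ε^Y` and `X³ = Y + ε³`; in regime 2,
`Y = X² + ε^Y` and `X³ = X¹ + Y + ε³`.  Noise variances: all 1 in regime 0; in regimes 1 and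
2, `Var(ε¹) = Var(ε^Y) = 1` and `Var(ε²) = Var(ε³) = 4`.  The population OLS coefficient of
`Y` given all covariates equals `(0.5, 0.5, 0.5, 0)ᵀ`, `(0.8, 0.8, 0.2, 0)ᵀ`, and
`(−0.2, 0.8, 0.2, 0)ᵀ` in the three regimes; in particular it changes at both `k₁` and `k₂`,
so both are regression change points (though the causal mechanism of `Y` only changes at `k₂`). -/
theorem example_lscm_ols_values
    {Ω : Type*} [MeasurableSpace Ω] (P : Measure Ω) [IsProbabilityMeasure P]
    (e1 e2 e3 eY : Fin 3 → Ω → ℝ)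
    (v1 : Fin 3 → NNReal) (hv1 : v1 = ![1, 1, 1])
    (v2 : Fin 3 → NNReal) (hv2 : v2 = ![1, 4, 4])
    (v3 : Fin 3 → NNReal) (hv3 : v3 = ![1, 4, 4])
    (vY : Fin 3 → NNReal) (hvY : vY = ![1, 1, 1])
    (hind : ∀ r, ProbabilityTheory.iIndepFun
      ![e1 r, e2 r, e3 r, eY r] P)
    (he1 : ∀ r, Measure.map (e1 r) P = ProbabilityTheory.gaussianReal 0 (v1 r))
    (he2 : ∀ r, Measure.map (e2 r) P = ProbabilityTheory.gaussianReal 0 (v2 r))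
    (he3 : ∀ r, Measure.map (e3 r) P = ProbabilityTheory.gaussianReal 0 (v3 r))
    (heY : ∀ r, Measure.map (eY r) P = ProbabilityTheory.gaussianReal 0 (vY r))
    (Y : Fin 3 → Ω → ℝ)
    (hY : ∀ r ω, Y r ω = (if (r : ℕ) < 2 then e1 r ω else 0) + e2 r ω + eY r ω)
    (X3 : Fin 3 → Ω → ℝ)
    (hX3 : ∀ r ω, X3 r ω = (if (r : ℕ) = 2 then e1 r ω else 0) + Y r ω + e3 r ω)
    (X : Fin 3 → Ω → Fin 4 → ℝ)
    (hX : ∀ r ω, X r ω = ![e1 r ω, e2 r ω, X3 r ω, 1]) :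
    betaOLS P (X 0) (Y 0) Finset.univ = ![0.5, 0.5, 0.5, 0] ∧
    betaOLS P (X 1) (Y 1) Finset.univ = ![0.8, 0.8, 0.2, 0] ∧
    betaOLS P (X 2) (Y 2) Finset.univ = ![-0.2, 0.8, 0.2, 0] ∧
    betaOLS P (X 0) (Y 0) Finset.univ ≠ betaOLS P (X 1) (Y 1) Finset.univ ∧
    betaOLS P (X 1) (Y 1) Finset.univ ≠ betaOLS P (X 2) (Y 2) Finset.univ := by
  subst hv1 hv2 hv3 hvY
  have hs0 : ∀ (g : Fin 4 → Ω → ℝ) (c : Ω → ℝ), (Fin.snoc g c : Fin 5 → Ω → ℝ) 0 = g 0 :=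
    fun _ _ => rfl
  have hs1 : ∀ (g : Fin 4 → Ω → ℝ) (c : Ω → ℝ), (Fin.snoc g c : Fin 5 → Ω → ℝ) 1 = g 1 :=
    fun _ _ => rfl
  have hs2 : ∀ (g : Fin 4 → Ω → ℝ) (c : Ω → ℝ), (Fin.snoc g c : Fin 5 → Ω → ℝ) 2 = g 2 :=
    fun _ _ => rfl
  have hs3 : ∀ (g : Fin 4 → Ω → ℝ) (c : Ω → ℝ), (Fin.snoc g c : Fin 5 → Ω → ℝ) 3 = g 3 :=
    fun _ _ => rfl
  have hs4 : ∀ (g : Fin 4 → Ω → ℝ) (c : Ω → ℝ), (Fin.snoc g c : Fin 5 → Ω → ℝ) 4 = c :=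
    fun _ _ => rfl
  have hA : ∀ r : Fin 3, ∀ i ω, X r ω i =
      ∑ k, (![![1,0,0,0,0],![0,1,0,0,0],![1,1,1,1,0],![0,0,0,0,1]] : Fin 4 → Fin 5 → ℝ) i k *
        (Fin.snoc ![e1 r, e2 r, e3 r, eY r] (fun _ => (1:ℝ)) : Fin 5 → Ω → ℝ) k ω := by
    intro r i ω
    fin_cases r <;> fin_cases i <;>
      simp [hX, hX3, hY, Fin.sum_univ_five, hs0, hs1, hs2, hs3, hs4] <;> ring
  have h0 : betaOLS P (X 0) (Y 0) Finset.univ = ![0.5, 0.5, 0.5, 0] := by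
    refine regime_beta P ![e1 0, e2 0, e3 0, eY 0] ![1,1,1,1] ?_ (hind 0) ?_
      ![1,1,1,1,1] ?_ (X 0) (Y 0) ![![1,0,0,0,0],![0,1,0,0,0],![1,1,1,1,0],![0,0,0,0,1]]
      ![1,1,0,1,0] (hA 0) ?_
      !![1,0,1,0; 0,1,1,0; 1,1,4,0; 0,0,0,1] ![1,1,3,0] ![0.5, 0.5, 0.5, 0] ?_ ?_ ?_ ?_
    · intro i; fin_cases i <;> norm_num
    · intro i; fin_cases i <;>
        [simpa using he1 0; simpa using he2 0; simpa using he3 0; simpa using heY 0]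
    · funext k; fin_cases k <;> simp [Fin.snoc] <;> first | rfl | norm_num [Fin.castPred, Fin.castLT]
    · intro ω
      simp [hY, Fin.sum_univ_five, hs0, hs1, hs2, hs3, hs4]
    · intro i j; fin_cases i <;> fin_cases j <;> norm_num [Fin.sum_univ_five, Matrix.cons_val_two, Matrix.cons_val_three, Matrix.cons_val_four]
    · intro i; fin_cases i <;> norm_num [Fin.sum_univ_five, Matrix.cons_val_two, Matrix.cons_val_three, Matrix.cons_val_four]
    · refine isUnit_iff_ne_zero.mpr ?_
      simp [Matrix.det_succ_row_zero, Fin.sum_univ_succ, Fin.succAbove]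
      norm_num
    · funext i; fin_cases i <;> norm_num [Matrix.mulVec, dotProduct, Fin.sum_univ_four, Matrix.cons_val_two, Matrix.cons_val_three, Matrix.cons_val_four]
  have h1 : betaOLS P (X 1) (Y 1) Finset.univ = ![0.8, 0.8, 0.2, 0] := by
    refine regime_beta P ![e1 1, e2 1, e3 1, eY 1] ![1,4,4,1] ?_ (hind 1) ?_
      ![1,4,4,1,1] ?_ (X 1) (Y 1) ![![1,0,0,0,0],![0,1,0,0,0],![1,1,1,1,0],![0,0,0,0,1]]
      ![1,1,0,1,0] (hA 1) ?_
      !![1,0,1,0; 0,4,4,0; 1,4,10,0; 0,0,0,1] ![1,4,6,0] ![0.8, 0.8, 0.2, 0] ?_ ?_ ?_ ?_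
    · intro i; fin_cases i <;> norm_num
    · intro i; fin_cases i <;>
        [simpa using he1 1; simpa using he2 1; simpa using he3 1; simpa using heY 1]
    · funext k; fin_cases k <;> simp [Fin.snoc] <;> first | rfl | norm_num [Fin.castPred, Fin.castLT]
    · intro ω
      simp [hY, Fin.sum_univ_five, hs0, hs1, hs2, hs3, hs4]
    · intro i j; fin_cases i <;> fin_cases j <;> norm_num [Fin.sum_univ_five, Matrix.cons_val_two, Matrix.cons_val_three, Matrix.cons_val_four]
    · intro i; fin_cases i <;> norm_num [Fin.sum_univ_five, Matrix.cons_val_two, Matrix.cons_val_three, Matrix.cons_val_four]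
    · refine isUnit_iff_ne_zero.mpr ?_
      simp [Matrix.det_succ_row_zero, Fin.sum_univ_succ, Fin.succAbove]
      norm_num
    · funext i; fin_cases i <;> norm_num [Matrix.mulVec, dotProduct, Fin.sum_univ_four, Matrix.cons_val_two, Matrix.cons_val_three, Matrix.cons_val_four]
  have h2 : betaOLS P (X 2) (Y 2) Finset.univ = ![-0.2, 0.8, 0.2, 0] := by
    refine regime_beta P ![e1 2, e2 2, e3 2, eY 2] ![1,4,4,1] ?_ (hind 2) ?_
      ![1,4,4,1,1] ?_ (X 2) (Y 2) ![![1,0,0,0,0],![0,1,0,0,0],![1,1,1,1,0],![0,0,0,0,1]]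
      ![0,1,0,1,0] (hA 2) ?_
      !![1,0,1,0; 0,4,4,0; 1,4,10,0; 0,0,0,1] ![0,4,5,0] ![-0.2, 0.8, 0.2, 0] ?_ ?_ ?_ ?_
    · intro i; fin_cases i <;> norm_num
    · intro i; fin_cases i <;>
        [simpa using he1 2; simpa using he2 2; simpa using he3 2; simpa using heY 2]
    · funext k; fin_cases k <;> simp [Fin.snoc] <;> first | rfl | norm_num [Fin.castPred, Fin.castLT]
    · intro ω
      simp [hY, Fin.sum_univ_five, hs0, hs1, hs2, hs3, hs4]
    · intro i j; fin_cases i <;> fin_cases j <;> norm_num [Fin.sum_univ_five, Matrix.cons_val_two, Matrix.cons_val_three, Matrix.cons_val_four]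
    · intro i; fin_cases i <;> norm_num [Fin.sum_univ_five, Matrix.cons_val_two, Matrix.cons_val_three, Matrix.cons_val_four]
    · refine isUnit_iff_ne_zero.mpr ?_
      simp [Matrix.det_succ_row_zero, Fin.sum_univ_succ, Fin.succAbove]
      norm_num
    · funext i; fin_cases i <;> norm_num [Matrix.mulVec, dotProduct, Fin.sum_univ_four, Matrix.cons_val_two, Matrix.cons_val_three, Matrix.cons_val_four]
  refine ⟨h0, h1, h2, ?_, ?_⟩
  · rw [h0, h1]
    intro h
    have := congrFun h 2
    norm_num [Matrix.cons_val_two] at this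
  · rw [h1, h2]
    intro h
    have := congrFun h 0
    norm_num at this
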